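/- arXiv:2301.04886 — 3 statements merged into one kernel-verified Lean document; each statement's English description precedes it below -/
import Mathlib

section
/- For β > 1, there exists a unique positive real solution m(β) to the equation x = tanh(βx). -/
private noncomputable def gfun (β : ℝ) (x : ℝ) : ℝ :=
  Real.log (1 + x) - Real.log (1 - x) - 2 * β * x

private lemma gfun_hasDerivAt (β x : ℝ) (h1 : -1 < x) (h2 : x < 1) :
    HasDerivAt (gfun β) (1 / (1 + x) + 1 / (1 - x) - 2 * β) x := by
  have hx1 : (1 : ℝ) + x ≠ 0 := by linarith
  have hx2 : (1 : ℝ) - x ≠ 0 := by linarith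
  have d1 : HasDerivAt (fun y : ℝ => Real.log (1 + y)) (1 / (1 + x)) x := by
    have : HasDerivAt (fun y : ℝ => 1 + y) 1 x := (hasDerivAt_id x).const_add 1
    simpa [one_div, Function.comp_def] using (Real.hasDerivAt_log hx1).comp x this
  have d2 : HasDerivAt (fun y : ℝ => Real.log (1 - y)) (-(1 / (1 - x))) x := by
    have : HasDerivAt (fun y : ℝ => 1 - y) (-1) x := by
      exact (hasDerivAt_id' x).const_sub 1
    have := (Real.hasDerivAt_log hx2).comp x this
    simpa [one_div, Function.comp_def] using this
  have d3 : HasDerivAt (fun y : ℝ => 2 * β * y) (2 * β) x := by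
    simpa using (hasDerivAt_id x).const_mul (2 * β)
  have := (d1.sub d2).sub d3
  exact this.congr_deriv (by ring)

private lemma gfun_strictConvex (β : ℝ) :
    StrictConvexOn ℝ (Set.Ico (0:ℝ) 1) (gfun β) := by
  have hcont : ContinuousOn (gfun β) (Set.Ico (0:ℝ) 1) := by
    intro x hx
    exact ((gfun_hasDerivAt β x (by linarith [hx.1]) hx.2).continuousAt).continuousWithinAt
  refine StrictMonoOn.strictConvexOn_of_deriv (convex_Ico 0 1) hcont ?_
  rw [interior_Ico]
  intro a ha b hb hab
  rw [(gfun_hasDerivAt β a (by linarith [ha.1]) ha.2).deriv,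
      (gfun_hasDerivAt β b (by linarith [hb.1]) hb.2).deriv]
  have h1a : (0:ℝ) < 1 + a := by linarith [ha.1]
  have h2a : (0:ℝ) < 1 - a := by linarith [ha.2]
  have h1b : (0:ℝ) < 1 + b := by linarith [hb.1]
  have h2b : (0:ℝ) < 1 - b := by linarith [hb.2]
  have e1 : 1 / (1 + a) + 1 / (1 - a) = 2 / ((1 + a) * (1 - a)) := by
    field_simp; ring
  have e2 : 1 / (1 + b) + 1 / (1 - b) = 2 / ((1 + b) * (1 - b)) := by
    field_simp; ring
  have key : 2 / ((1 + a) * (1 - a)) < 2 / ((1 + b) * (1 - b)) := by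
    apply div_lt_div_of_pos_left (by norm_num) (by positivity)
    nlinarith [ha.1, hab]
  rw [e1, e2]; linarith

private lemma gfun_zero_iff (β x : ℝ) (hx0 : 0 < x) (hx1 : x < 1) :
    gfun β x = 0 ↔ x = Real.tanh (β * x) := by
  have h1 : (0:ℝ) < 1 + x := by linarith
  have h2 : (0:ℝ) < 1 - x := by linarith
  have hE : 0 < Real.exp (β * x) := Real.exp_pos _
  have hE2 : Real.exp (β * x) * Real.exp (β * x) = Real.exp (2 * β * x) := by
    rw [← Real.exp_add]; ring_nf
  have htanh : Real.tanh (β * x)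
      = (Real.exp (β * x) - Real.exp (-(β * x))) / (Real.exp (β * x) + Real.exp (-(β * x))) := by
    rw [Real.tanh_eq_sinh_div_cosh, Real.sinh_eq, Real.cosh_eq]
    field_simp
  constructor
  · intro hg
    have hlog : Real.log (1 + x) - Real.log (1 - x) = 2 * β * x := by
      unfold gfun at hg; linarith
    have : Real.log ((1 + x) / (1 - x)) = 2 * β * x := by
      rw [Real.log_div h1.ne' h2.ne']; exact hlog
    have hexp : Real.exp (2 * β * x) = (1 + x) / (1 - x) := by
      rw [← this, Real.exp_log (by positivity)]
    rw [htanh]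
    rw [Real.exp_neg]
    rw [eq_div_iff (by positivity)]
    have h3 : Real.exp (β*x) * Real.exp (β*x) * (1 - x) = 1 + x := by
      rw [hE2, hexp]; field_simp
    field_simp
    ring_nf at h3 ⊢
    nlinarith [h3]
  · intro hx
    have hx' : x * (Real.exp (β * x) + Real.exp (-(β * x)))
        = Real.exp (β * x) - Real.exp (-(β * x)) := by
      rw [htanh] at hx
      field_simp at hx ⊢
      linarith [hx]
    rw [Real.exp_neg] at hx'
    have h3 : Real.exp (2 * β * x) * (1 - x) = 1 + x := by
      rw [← hE2]
      field_simp at hx'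
      ring_nf at hx' ⊢
      nlinarith [hx']
    have hexp : Real.exp (2 * β * x) = (1 + x) / (1 - x) := by
      rw [eq_div_iff h2.ne']; exact h3
    have : 2 * β * x = Real.log ((1 + x) / (1 - x)) := by
      rw [← hexp, Real.log_exp]
    unfold gfun
    rw [Real.log_div h1.ne' h2.ne'] at this
    linarith

private lemma tanh_lt_one (t : ℝ) : Real.tanh t < 1 := by
  rw [Real.tanh_eq_sinh_div_cosh, Real.sinh_eq, Real.cosh_eq]
  rw [div_lt_one (by positivity)]
  have := Real.exp_pos (-t)
  linarith

theorem stmt_2 (β : ℝ) (hβ : 1 < β) :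
    ∃! x : ℝ, 0 < x ∧ x = Real.tanh (β * x) := by
  -- a and b for IVT
  set a : ℝ := (β - 1) / (2 * β - 1) with ha_def
  set b : ℝ := 1 - Real.exp (-(3 * β)) with hb_def
  have h2β : (0:ℝ) < 2 * β - 1 := by linarith
  have ha0 : 0 < a := div_pos (by linarith) h2β
  have ha1 : a < 1 := by
    rw [ha_def, div_lt_one h2β]; linarith
  have hb1 : b < 1 := by
    have := Real.exp_pos (-(3 * β)); simp [hb_def]; linarith
  have hab : a < b := by
    have h1 : Real.exp (-(3 * β)) < β / (2 * β - 1) := by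
      have : Real.exp (-(3*β)) < Real.exp 0 := by
        apply Real.exp_lt_exp.2; linarith
      rw [Real.exp_zero] at this
      have hhalf : (1:ℝ)/2 < β / (2*β-1) := by
        rw [div_lt_div_iff₀ (by norm_num) h2β]; linarith
      have hexp3 : Real.exp (-(3*β)) < 1/2 := by
        have h4 : (4:ℝ) ≤ Real.exp (3*β) := by
          calc (4:ℝ) ≤ 3*β + 1 := by linarith
          _ ≤ Real.exp (3*β) := by linarith [Real.add_one_le_exp (3*β)]
        rw [Real.exp_neg]
        rw [inv_lt_comm₀ (Real.exp_pos _) (by norm_num)]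
        linarith
      linarith
    have : 1 - a = β / (2*β-1) := by
      rw [ha_def, eq_div_iff h2β.ne', sub_mul, div_mul_cancel₀ _ h2β.ne']; ring
    rw [hb_def]; linarith [h1, this]
  -- g a < 0
  have hga : gfun β a < 0 := by
    have hl1 : Real.log (1 + a) < a := by
      have := Real.log_lt_sub_one_of_pos (by linarith : (0:ℝ) < 1 + a) (by linarith)
      linarith
    have hl2 : -Real.log (1 - a) < a / (1 - a) := by
      have h2 : (0:ℝ) < 1 - a := by linarith
      have := Real.log_lt_sub_one_of_pos (by positivity : (0:ℝ) < (1 - a)⁻¹)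
        (by
          intro h
          have : (1:ℝ) - a = 1 := by
            field_simp at h; linarith
          linarith)
      rw [Real.log_inv] at this
      have : -Real.log (1-a) < (1-a)⁻¹ - 1 := by linarith
      calc -Real.log (1-a) < (1-a)⁻¹ - 1 := this
        _ = a / (1-a) := by field_simp; ring
    have hfrac : a / (1 - a) = (2*β - 1) * a / β := by
      have h1a : (1:ℝ) - a = β / (2*β-1) := by rw [ha_def, eq_div_iff h2β.ne', sub_mul, div_mul_cancel₀ _ h2β.ne']; ring
      rw [h1a]; field_simp
    have hsum : a + (2*β-1)*a/β ≤ 2*β*a := by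
      have hβ0 : (0:ℝ) < β := by linarith
      rw [← sub_nonneg]
      have heq : 2*β*a - (a + (2*β-1)*a/β) = a*(2*β-1)*(β-1)/β := by
        field_simp; ring
      rw [heq]
      apply div_nonneg _ hβ0.le
      exact mul_nonneg (mul_nonneg ha0.le h2β.le) (by linarith)
    unfold gfun
    calc Real.log (1+a) - Real.log (1-a) - 2*β*a
        < a + a/(1-a) - 2*β*a := by linarith
      _ = a + (2*β-1)*a/β - 2*β*a := by rw [hfrac]
      _ ≤ 0 := by linarith
  -- g b > 0
  have hgb : 0 < gfun β b := by
    have hb0 : 0 < b := by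
      have : Real.exp (-(3*β)) < 1 := by
        rw [Real.exp_lt_one_iff]; linarith
      rw [hb_def]; linarith
    have hl1 : 0 ≤ Real.log (1 + b) := Real.log_nonneg (by linarith)
    have hl2 : Real.log (1 - b) = -(3*β) := by
      rw [hb_def]; simp [Real.log_exp]
    unfold gfun
    rw [hl2]
    nlinarith [hb0, hb1, hβ, hl1]
  -- IVT
  have hcont : ContinuousOn (gfun β) (Set.Icc a b) := by
    intro x hx
    exact ((gfun_hasDerivAt β x (by linarith [hx.1]) (by linarith [hx.2])).continuousAt).continuousWithinAt
  have hIVT := intermediate_value_Icc hab.le hcont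
  have h0mem : (0:ℝ) ∈ Set.Icc (gfun β a) (gfun β b) := ⟨hga.le, hgb.le⟩
  obtain ⟨c, hc, hgc⟩ := hIVT h0mem
  have hc0 : 0 < c := lt_of_lt_of_le ha0 hc.1
  have hc1 : c < 1 := lt_of_le_of_lt hc.2 hb1
  refine ⟨c, ⟨hc0, (gfun_zero_iff β c hc0 hc1).1 hgc⟩, ?_⟩
  · -- uniqueness
    intro y ⟨hy0, hy⟩
    have hy1 : y < 1 := by rw [hy]; exact tanh_lt_one _
    have hgy : gfun β y = 0 := (gfun_zero_iff β y hy0 hy1).2 hy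
    by_contra hne
    -- both y and c are zeros of g in (0,1), plus g 0 = 0 — contradicts strict convexity
    have hg0 : gfun β 0 = 0 := by unfold gfun; simp
    have key : ∀ u v : ℝ, 0 < u → u < v → v < 1 → gfun β u = 0 → gfun β v = 0 → False := by
      intro u v hu huv hv1 hgu hgv
      have sc := gfun_strictConvex β
      have h0m : (0:ℝ) ∈ Set.Ico (0:ℝ) 1 := ⟨le_refl _, by norm_num⟩
      have hvm : v ∈ Set.Ico (0:ℝ) 1 := ⟨by linarith, hv1⟩
      have hne0v : (0:ℝ) ≠ v := by linarith
      have hA : 0 < 1 - u / v := by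
        rw [sub_pos, div_lt_one (by linarith)]; exact huv
      have hB : 0 < u / v := div_pos hu (by linarith)
      have hAB : (1 - u/v) + u/v = 1 := by ring
      have := sc.2 h0m hvm hne0v hA hB hAB
      have hcomb : (1 - u/v) • (0:ℝ) + (u/v) • v = u := by
        have hv0 : v ≠ 0 := by linarith
        simp [smul_eq_mul]; field_simp
      rw [hcomb, hg0, hgv] at this
      simp [hgu] at this
    rcases lt_or_gt_of_ne hne with h | h
    · exact absurd (key y c hy0 h hc1 hgy hgc) (not_false)
    · exact absurd (key c y hc0 h hy1 hgc hgy) (not_false)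
end

section
/- Local limit bound: there exists a constant C > 0 such that for all N ≥ 1 and all integers s with |s| ≤ N and s ≡ N (mod 2), the binomial coefficient satisfies C(N, (s+N)/2) ≤ C · 2^N · N^{-1/2} · exp(-s²/(2N)). -/
lemma lemA : ∀ t : ℝ, 0 ≤ t → 1 - t ≤ (1 + t) * Real.exp (-2 * t) := by
  have hd : ∀ x : ℝ, HasDerivAt (fun t => (1 + t) * Real.exp (-2 * t) - (1 - t))
      (1 - (1 + 2 * x) * Real.exp (-2 * x)) x := by
    intro x
    have h1 : HasDerivAt (fun t : ℝ => -2 * t) (-2) x := by simpa using (hasDerivAt_id x).const_mul (-2)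
    have h2 : HasDerivAt (fun t : ℝ => Real.exp (-2 * t)) (Real.exp (-2 * x) * -2) x :=
      (Real.hasDerivAt_exp (-2 * x)).comp x h1
    have h3 : HasDerivAt (fun t : ℝ => 1 + t) 1 x := (hasDerivAt_id x).const_add 1
    have h4 : HasDerivAt (fun t : ℝ => 1 - t) (-1) x := (hasDerivAt_id x).const_sub 1
    have := (h3.mul h2).sub h4
    exact this.congr_deriv (by ring)
  have hmono : Monotone (fun t : ℝ => (1 + t) * Real.exp (-2 * t) - (1 - t)) := by
    apply monotone_of_deriv_nonneg
    · exact fun x => (hd x).differentiableAt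
    · intro x
      rw [(hd x).deriv]
      have h1 := Real.add_one_le_exp (2 * x)
      have h2 : Real.exp (-2 * x) * Real.exp (2 * x) = 1 := by
        rw [← Real.exp_add]; norm_num
      have h3 := Real.exp_pos (-2 * x)
      nlinarith
  intro t ht
  have := hmono ht
  simp at this
  rw [show (-2:ℝ) * t = -(2*t) by ring]; linarith

lemma lemB : ∀ m : ℕ, (Nat.centralBinom m : ℝ) * Real.sqrt (3 * m + 1) ≤ 4 ^ m := by
  intro m
  induction m with
  | zero => simp [Nat.centralBinom_zero]
  | succ n ih =>
    have hrec := Nat.succ_mul_centralBinom_succ n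
    have hrecR : ((n:ℝ) + 1) * (Nat.centralBinom (n+1) : ℝ) = 2 * (2 * n + 1) * Nat.centralBinom n := by
      exact_mod_cast congrArg (fun x : ℕ => (x : ℝ)) hrec
    have hn1 : (0:ℝ) < (n:ℝ) + 1 := by positivity
    -- key: (2n+1) * sqrt(3n+4) ≤ 2(n+1) * sqrt(3n+1)
    have key : (2 * (n:ℝ) + 1) * Real.sqrt (3 * n + 4) ≤ 2 * ((n:ℝ) + 1) * Real.sqrt (3 * n + 1) := by
      have h1 : (2 * (n:ℝ) + 1) * Real.sqrt (3 * n + 4) = Real.sqrt ((2 * n + 1)^2 * (3 * n + 4)) := by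
        rw [Real.sqrt_mul (by positivity), Real.sqrt_sq (by positivity)]
      have h2 : 2 * ((n:ℝ) + 1) * Real.sqrt (3 * n + 1) = Real.sqrt ((2 * (n + 1))^2 * (3 * n + 1)) := by
        rw [Real.sqrt_mul (by positivity), Real.sqrt_sq (by positivity)]
      rw [h1, h2]
      apply Real.sqrt_le_sqrt
      nlinarith [Nat.cast_nonneg (α := ℝ) n]
    have hcb : (0:ℝ) ≤ (Nat.centralBinom n : ℝ) := Nat.cast_nonneg _
    have hsq : (0:ℝ) ≤ Real.sqrt (3 * n + 4) := Real.sqrt_nonneg _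
    have hpush : ((n:ℝ)+1) * ((Nat.centralBinom (n+1) : ℝ) * Real.sqrt (3 * (n+1) + 1)) ≤ ((n:ℝ)+1) * (4 ^ (n+1)) := by
      have e1 : ((n:ℝ)+1) * ((Nat.centralBinom (n+1) : ℝ) * Real.sqrt (3 * (n+1) + 1))
          = 2 * (2 * n + 1) * Nat.centralBinom n * Real.sqrt (3 * n + 4) := by
        rw [← mul_assoc, hrecR]
        push_cast
        ring_nf
      rw [e1]
      calc 2 * (2 * (n:ℝ) + 1) * Nat.centralBinom n * Real.sqrt (3 * n + 4)
          = 2 * (Nat.centralBinom n : ℝ) * ((2 * n + 1) * Real.sqrt (3 * n + 4)) := by ring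
        _ ≤ 2 * (Nat.centralBinom n : ℝ) * (2 * ((n:ℝ) + 1) * Real.sqrt (3 * n + 1)) := by
            apply mul_le_mul_of_nonneg_left key (by positivity)
        _ = 4 * ((n:ℝ)+1) * ((Nat.centralBinom n : ℝ) * Real.sqrt (3 * n + 1)) := by ring
        _ ≤ 4 * ((n:ℝ)+1) * 4 ^ n := by
            apply mul_le_mul_of_nonneg_left ih (by positivity)
        _ = ((n:ℝ)+1) * 4 ^ (n+1) := by ring
    have := (mul_le_mul_iff_right₀ hn1).mp hpush
    push_cast
    push_cast at this
    linarith

lemma lemB' (N : ℕ) : (N.choose (N / 2) : ℝ) * Real.sqrt N ≤ 2 ^ N := by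
  rcases Nat.even_or_odd N with ⟨m, hm⟩ | ⟨m, hm⟩
  · subst hm
    have h2 : m + m = 2 * m := by ring
    rw [h2]
    have hdiv : 2 * m / 2 = m := by omega
    rw [hdiv]
    have hc : (2 * m).choose m = Nat.centralBinom m := (Nat.centralBinom_eq_two_mul_choose m).symm
    rw [hc]
    push_cast
    calc (Nat.centralBinom m : ℝ) * Real.sqrt (2 * m)
        ≤ (Nat.centralBinom m : ℝ) * Real.sqrt (3 * m + 1) := by
          apply mul_le_mul_of_nonneg_left _ (Nat.cast_nonneg _)
          apply Real.sqrt_le_sqrt; push_cast; linarith [Nat.cast_nonneg (α := ℝ) m]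
      _ ≤ 4 ^ m := lemB m
      _ = 2 ^ (2 * m) := by rw [pow_mul]; norm_num
  · subst hm
    have hdiv : (2 * m + 1) / 2 = m := by omega
    rw [hdiv]
    -- 2 * choose (2m+1) m = centralBinom (m+1)
    have hkey : Nat.centralBinom (m + 1) = 2 * (2 * m + 1).choose m := by
      rw [Nat.centralBinom_eq_two_mul_choose]
      have h1 : 2 * (m + 1) = (2 * m + 1) + 1 := by ring
      rw [h1, Nat.choose_succ_succ]
      have h2 : (2 * m + 1).choose (m + 1) = (2 * m + 1).choose m := by
        have h3 := Nat.choose_symm (show m ≤ 2 * m + 1 by omega)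
        rwa [show 2 * m + 1 - m = m + 1 from by omega] at h3
      simp only [Nat.succ_eq_add_one] at *
      omega
    have hB := lemB (m + 1)
    have hcb : ((Nat.centralBinom (m+1)) : ℝ) = 2 * ((2 * m + 1).choose m : ℝ) := by
      exact_mod_cast congrArg (fun x : ℕ => (x : ℝ)) hkey
    have hs : Real.sqrt (2 * m + 1) ≤ Real.sqrt (3 * (m + 1) + 1) := by
      apply Real.sqrt_le_sqrt; push_cast; linarith [Nat.cast_nonneg (α := ℝ) m]
    have hchoose : (0:ℝ) ≤ ((2 * m + 1).choose m : ℝ) := Nat.cast_nonneg _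
    have : 2 * ((2 * m + 1).choose m : ℝ) * Real.sqrt (2 * m + 1) ≤ 4 ^ (m + 1) := by
      calc 2 * ((2 * m + 1).choose m : ℝ) * Real.sqrt (2 * m + 1)
          ≤ 2 * ((2 * m + 1).choose m : ℝ) * Real.sqrt (3 * (m+1) + 1) := by
            apply mul_le_mul_of_nonneg_left hs (by positivity)
        _ = (Nat.centralBinom (m+1) : ℝ) * Real.sqrt (3 * (m+1) + 1) := by rw [hcb]
        _ ≤ 4 ^ (m + 1) := by push_cast at hB ⊢; exact hB
    have h4 : (4:ℝ) ^ (m+1) = 2 * 2 ^ (2 * m + 1) := by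
      rw [show (4:ℝ) = 2^2 by norm_num, ← pow_mul]
      rw [show 2 * (m+1) = (2*m+1)+1 by ring, pow_succ]
      ring
    push_cast
    push_cast at this
    nlinarith [this]

lemma lemStep (N k : ℕ) (h1 : N ≤ 2 * k + 1) (h2 : k < N) :
    (N.choose (k + 1) : ℝ) ≤ (N.choose k : ℝ) *
      Real.exp (-2 * ((2 * k + 1 - N : ℝ) / ((N : ℝ) + 1))) := by
  set t : ℝ := (2 * k + 1 - N : ℝ) / ((N : ℝ) + 1) with ht
  have hN1 : (0:ℝ) < (N:ℝ) + 1 := by positivity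
  have ht0 : 0 ≤ t := by
    apply div_nonneg _ (le_of_lt hN1)
    have : (N:ℝ) ≤ 2 * k + 1 := by exact_mod_cast h1
    linarith
  have hA := lemA t ht0
  have h1t : 1 - t = 2 * ((N:ℝ) - k) / ((N:ℝ) + 1) := by
    rw [ht]; field_simp; ring
  have h2t : 1 + t = 2 * ((k:ℝ) + 1) / ((N:ℝ) + 1) := by
    rw [ht]; field_simp; ring
  have hE : (0:ℝ) < Real.exp (-2 * t) := Real.exp_pos _
  -- (N - k) ≤ (k+1) * exp(-2t)
  have hkey : (N:ℝ) - k ≤ ((k:ℝ) + 1) * Real.exp (-2 * t) := by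
    rw [h1t, h2t] at hA
    rw [div_mul_eq_mul_div, div_le_div_iff₀ hN1 hN1] at hA
    nlinarith [hA]
  have hrec := Nat.choose_succ_right_eq N k
  have hrecR : (N.choose (k+1) : ℝ) * ((k:ℝ) + 1) = (N.choose k : ℝ) * ((N:ℝ) - k) := by
    have := congrArg (fun x : ℕ => (x : ℝ)) hrec
    push_cast at this
    rw [Nat.cast_sub (le_of_lt h2)] at this
    push_cast at this
    linarith [this]
  have hk1 : (0:ℝ) < (k:ℝ) + 1 := by positivity
  rw [← mul_le_mul_iff_left₀ hk1, hrecR]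
  calc (N.choose k : ℝ) * ((N:ℝ) - k)
      ≤ (N.choose k : ℝ) * (((k:ℝ) + 1) * Real.exp (-2 * t)) :=
        mul_le_mul_of_nonneg_left hkey (Nat.cast_nonneg _)
    _ = (N.choose k : ℝ) * Real.exp (-2 * t) * ((k:ℝ) + 1) := by ring

lemma lemAux (N c : ℕ) (hc : N ≤ 2 * c + 1) : ∀ d : ℕ, c + d ≤ N →
    (N.choose (c + d) : ℝ) ≤ (N.choose c : ℝ) *
      Real.exp (-2 * ((d:ℝ) * ((d:ℝ) + 2 * c - N)) / ((N:ℝ) + 1)) := by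
  intro d
  induction d with
  | zero => intro _; simp
  | succ e ih =>
    intro hle
    have hle' : c + e ≤ N := by omega
    have hlt : c + e < N := by omega
    have hstep := lemStep N (c + e) (by omega) hlt
    push_cast at hstep
    have ihh := ih hle'
    have hEpos : (0:ℝ) < Real.exp (-2 * ((2 * ((c:ℝ)+(e:ℝ)) + 1 - (N:ℝ)) / ((N : ℝ) + 1))) := Real.exp_pos _
    calc (N.choose (c + (e+1)) : ℝ)
        = (N.choose ((c + e) + 1) : ℝ) := by ring_nf
      _ ≤ (N.choose (c+e) : ℝ) * Real.exp (-2 * ((2 * ((c:ℝ)+(e:ℝ)) + 1 - (N:ℝ)) / ((N : ℝ) + 1))) := hstep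
      _ ≤ ((N.choose c : ℝ) * Real.exp (-2 * ((e:ℝ) * ((e:ℝ) + 2 * c - N)) / ((N:ℝ) + 1)))
            * Real.exp (-2 * ((2 * ((c:ℝ)+(e:ℝ)) + 1 - (N:ℝ)) / ((N : ℝ) + 1))) :=
          mul_le_mul_of_nonneg_right ihh (le_of_lt hEpos)
      _ = (N.choose c : ℝ) * Real.exp (-2 * (((e:ℝ)+1) * (((e:ℝ)+1) + 2 * c - N)) / ((N:ℝ) + 1)) := by
          rw [mul_assoc, ← Real.exp_add]
          congr 1
          push_cast
          field_simp
          ring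
      _ = (N.choose c : ℝ) * Real.exp (-2 * ((((e:ℕ)+1 : ℕ):ℝ) * ((((e:ℕ)+1 : ℕ):ℝ) + 2 * c - N)) / ((N:ℝ) + 1)) := by
          push_cast; ring_nf

lemma mainpos (N : ℕ) (hN : 1 ≤ N) (s : ℤ) (hs0 : 0 ≤ s) (hsN : s ≤ (N:ℤ))
    (hpar : (s + N) % 2 = 0) :
    (N.choose ((s + N) / 2).toNat : ℝ) ≤
      8 * 2 ^ N * (N : ℝ) ^ (-(1 : ℝ) / 2) * Real.exp (-(s : ℝ) ^ 2 / (2 * N)) := by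
  have hq := Int.mul_ediv_add_emod (s + N) 2
  rw [hpar, add_zero] at hq
  set kZ : ℤ := (s + N) / 2 with hkZdef
  have hkZ0 : 0 ≤ kZ := Int.ediv_nonneg (by omega) (by norm_num)
  set k : ℕ := kZ.toNat with hkdef
  have hkcast : (k : ℤ) = kZ := Int.toNat_of_nonneg hkZ0
  have hk2 : 2 * (k : ℤ) = s + N := by rw [hkcast]; exact hq
  set c : ℕ := N / 2 with hcdef
  have hc2 : 2 * c ≤ N ∧ N ≤ 2 * c + 1 := by constructor <;> omega
  have hck : c ≤ k := by omega
  have hkN : k ≤ N := by omega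
  obtain ⟨d, hd⟩ : ∃ d, k = c + d := ⟨k - c, by omega⟩
  have haux := lemAux N c hc2.2 d (by omega)
  rw [← hd] at haux
  -- real facts
  have hNR : (1:ℝ) ≤ (N:ℝ) := by exact_mod_cast hN
  have hsR : (s:ℝ) = 2 * ((c:ℝ) + d) - N := by
    have : (s:ℤ) = 2 * ((c:ℤ) + d) - N := by omega
    exact_mod_cast this
  have hdR : (c:ℝ) + d ≤ N := by exact_mod_cast (show ((c+d:ℕ):ℝ) ≤ (N:ℝ) from by exact_mod_cast (by omega : c + d ≤ N))
  have hcR1 : (N:ℝ) ≤ 2 * c + 1 := by exact_mod_cast hc2.2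
  have hcR2 : 2 * (c:ℝ) ≤ N := by exact_mod_cast hc2.1
  have hd0 : (0:ℝ) ≤ (d:ℝ) := Nat.cast_nonneg _
  have hsR0 : (0:ℝ) ≤ (s:ℝ) := by exact_mod_cast hs0
  -- exponent comparison
  have hexp : Real.exp (-2 * ((d:ℝ) * ((d:ℝ) + 2 * c - N)) / ((N:ℝ) + 1)) ≤
      Real.exp (3/2) * Real.exp (-(s : ℝ) ^ 2 / (2 * N)) := by
    rw [← Real.exp_add, Real.exp_le_exp]
    have e1 : (3:ℝ)/2 + -(s:ℝ)^2/(2*N) = (3*(N:ℝ) - (s:ℝ)^2) / (2*N) := by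
      field_simp; ring
    rw [e1, div_le_div_iff₀ (by positivity) (by positivity)]
    have hsR2 : (s:ℝ)^2 = (2 * ((c:ℝ) + d) - N)^2 := by rw [hsR]
    have hh1 : (0:ℝ) ≤ 4 * ((d:ℝ) * (-(2 * (c:ℝ) - N))) := by
      have : (0:ℝ) ≤ -(2 * (c:ℝ) - N) := by linarith
      positivity
    have hh2 : (0:ℝ) ≤ ((N:ℝ) + 1 - 2 * d) * ((N:ℝ) + 1 + 2 * d) := by
      apply mul_nonneg <;> nlinarith
    have hh3 : (0:ℝ) ≤ ((2 * (c:ℝ) - N) + 1) * (-(2 * (c:ℝ) - N)) * ((N:ℝ) + 1) := by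
      apply mul_nonneg (mul_nonneg (by linarith) (by linarith)) (by linarith)
    have hh4 : (0:ℝ) ≤ (1 + (2 * (c:ℝ) - N)) * ((N:ℝ) + 1) := by
      apply mul_nonneg (by linarith) (by linarith)
    have hh5 : (0:ℝ) ≤ 2 * ((N:ℝ) - 1) * ((N:ℝ) + 1) := by
      apply mul_nonneg (by linarith) (by linarith)
    nlinarith [hsR2, hh1, hh2, hh3, hh4, hh5]
  -- central bound
  have hB := lemB' N
  have hsqrt : (0:ℝ) < Real.sqrt N := Real.sqrt_pos.mpr (by positivity)
  have hBc : (N.choose c : ℝ) ≤ 2 ^ N / Real.sqrt N := by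
    rw [le_div_iff₀ hsqrt]; exact hB
  have hrw : (N : ℝ) ^ (-(1 : ℝ) / 2) = (Real.sqrt N)⁻¹ := by
    rw [show (-(1:ℝ)/2) = -(1/2) by ring, Real.rpow_neg (Nat.cast_nonneg N),
      ← Real.sqrt_eq_rpow]
  have h32 : Real.exp (3/2) ≤ 8 := by
    have ha : Real.exp (3/2 : ℝ) ≤ Real.exp 2 := Real.exp_le_exp.mpr (by norm_num)
    have hb : Real.exp (2:ℝ) = Real.exp 1 * Real.exp 1 := by
      rw [← Real.exp_add]; norm_num
    have he := Real.exp_one_lt_d9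
    have hp := Real.exp_pos 1
    calc Real.exp (3/2 : ℝ) ≤ Real.exp 2 := ha
      _ = Real.exp 1 * Real.exp 1 := hb
      _ ≤ 2.7182818286 * 2.7182818286 := by
          apply mul_le_mul (le_of_lt he) (le_of_lt he) (le_of_lt hp) (by norm_num)
      _ ≤ 8 := by norm_num
  have hEB : (0:ℝ) < Real.exp (-(s : ℝ) ^ 2 / (2 * N)) := Real.exp_pos _
  calc (N.choose k : ℝ)
      ≤ (N.choose c : ℝ) * Real.exp (-2 * ((d:ℝ) * ((d:ℝ) + 2 * c - N)) / ((N:ℝ) + 1)) := haux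
    _ ≤ (N.choose c : ℝ) * (Real.exp (3/2) * Real.exp (-(s : ℝ) ^ 2 / (2 * N))) :=
        mul_le_mul_of_nonneg_left hexp (Nat.cast_nonneg _)
    _ ≤ (2 ^ N / Real.sqrt N) * (Real.exp (3/2) * Real.exp (-(s : ℝ) ^ 2 / (2 * N))) := by
        apply mul_le_mul_of_nonneg_right hBc (by positivity)
    _ ≤ (2 ^ N / Real.sqrt N) * (8 * Real.exp (-(s : ℝ) ^ 2 / (2 * N))) := by
        apply mul_le_mul_of_nonneg_left _ (by positivity)
        exact mul_le_mul_of_nonneg_right h32 (le_of_lt hEB)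
    _ = 8 * 2 ^ N * (Real.sqrt N)⁻¹ * Real.exp (-(s : ℝ) ^ 2 / (2 * N)) := by
        field_simp
    _ = 8 * 2 ^ N * (N : ℝ) ^ (-(1 : ℝ) / 2) * Real.exp (-(s : ℝ) ^ 2 / (2 * N)) := by
        rw [hrw]

theorem stmt_9 :
    ∃ C : ℝ, 0 < C ∧ ∀ N : ℕ, 1 ≤ N → ∀ s : ℤ, |s| ≤ (N : ℤ) → (s + N) % 2 = 0 →
      (N.choose ((s + N) / 2).toNat : ℝ) ≤
        C * 2 ^ N * (N : ℝ) ^ (-(1 : ℝ) / 2) *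
          Real.exp (-(s : ℝ) ^ 2 / (2 * N)) := by
  refine ⟨8, by norm_num, ?_⟩
  intro N hN s habs hpar
  obtain ⟨hL, hR⟩ := abs_le.mp habs
  rcases le_or_gt 0 s with hs0 | hs0
  · exact mainpos N hN s hs0 (by omega) hpar
  · -- use symmetry: choose k = choose (N - k)
    have hsN : -s ≤ (N:ℤ) := by omega
    have habs' : -(N:ℤ) ≤ s := by omega
    have hpar' : (-s + N) % 2 = 0 := by omega
    have hmain := mainpos N hN (-s) (by omega) hsN hpar'
    have hq := Int.mul_ediv_add_emod (s + N) 2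
    rw [hpar, add_zero] at hq
    have hq' := Int.mul_ediv_add_emod (-s + N) 2
    rw [hpar', add_zero] at hq'
    have hchoose : N.choose ((s + N) / 2).toNat = N.choose ((-s + N) / 2).toNat := by
      have h1 : ((-s + N) / 2).toNat = N - ((s + N) / 2).toNat := by omega
      have h2 : ((s + N) / 2).toNat ≤ N := by omega
      rw [h1, Nat.choose_symm h2]
    have hsq : ((-s : ℤ) : ℝ) ^ 2 = ((s : ℤ) : ℝ) ^ 2 := by push_cast; ring
    rw [hchoose]
    rw [hsq] at hmain
    exact hmain
end

section
/- Let β < 1, δ := 1 - β > 0, and let f_N : {-1,+1}^N → ℝ≥0 be uniformly bounded by M. Suppose p : ℕ → (0,1] satisfies Np → ∞, and fix 0 < m < 1. Then (1/2^N) · ∑_{x : s_N(x)² > N(Np)^m} f_N(x) · exp(β·s_N(x)²/(2N)) → 0 as N → ∞. -/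
set_option maxHeartbeats 1000000

open Finset Real Filter

noncomputable def Sm (N : ℕ) (x : Fin N → Bool) : ℝ :=
  ∑ i, if x i then (1 : ℝ) else -1

lemma abs_Sm_le (N : ℕ) (x : Fin N → Bool) : |Sm N x| ≤ N := by
  calc |Sm N x| ≤ ∑ i : Fin N, |if x i then (1:ℝ) else -1| :=
        Finset.abs_sum_le_sum_abs _ _
    _ = N := by simp [apply_ite abs]

lemma sum_exp_Sm (N : ℕ) (t : ℝ) :
    ∑ x : Fin N → Bool, Real.exp (t * Sm N x) = (Real.exp t + Real.exp (-t)) ^ N := by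
  have h : ∀ x : Fin N → Bool,
      Real.exp (t * Sm N x) = ∏ i, Real.exp (t * if x i then (1:ℝ) else -1) := by
    intro x
    rw [Sm, Finset.mul_sum, Real.exp_sum]
  simp_rw [h]
  rw [← Fintype.sum_pow (fun b : Bool => Real.exp (t * if b then (1:ℝ) else -1)) N]
  simp [mul_comm]

lemma hoeffding (N : ℕ) (hN : 1 ≤ N) (u : ℝ) (hu : 0 ≤ u) :
    ((Finset.univ.filter (fun x : Fin N → Bool => u ≤ |Sm N x|)).card : ℝ)
      ≤ 2 ^ (N+1) * Real.exp (-u^2 / (2*N)) := by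
  have hNpos : (0:ℝ) < N := by exact_mod_cast hN
  set t : ℝ := u / N with ht
  have ht0 : 0 ≤ t := div_nonneg hu hNpos.le
  have key : ((Finset.univ.filter (fun x : Fin N → Bool => u ≤ |Sm N x|)).card : ℝ)
      * Real.exp (t * u) ≤ 2 ^ (N+1) * Real.exp (N * t^2 / 2) := by
    calc ((Finset.univ.filter (fun x : Fin N → Bool => u ≤ |Sm N x|)).card : ℝ)
          * Real.exp (t * u)
        ≤ ∑ x ∈ Finset.univ.filter (fun x : Fin N → Bool => u ≤ |Sm N x|),
            (Real.exp (t * Sm N x) + Real.exp (-t * Sm N x)) := by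
          rw [← nsmul_eq_mul]
          apply Finset.card_nsmul_le_sum
          intro x hx
          have hx' : u ≤ |Sm N x| := by simpa using (Finset.mem_filter.1 hx).2
          have h1 : Real.exp (t * u) ≤ Real.exp (t * |Sm N x|) := by
            apply Real.exp_le_exp.2
            exact mul_le_mul_of_nonneg_left hx' ht0
          rcases abs_cases (Sm N x) with ⟨h, _⟩ | ⟨h, _⟩
          · rw [h] at h1
            have := Real.exp_pos (-t * Sm N x)
            linarith
          · rw [h] at h1
            have := Real.exp_pos (t * Sm N x)
            rw [show t * -Sm N x = -t * Sm N x by ring] at h1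
            linarith
      _ ≤ ∑ x : Fin N → Bool, (Real.exp (t * Sm N x) + Real.exp (-t * Sm N x)) := by
          apply Finset.sum_le_sum_of_subset_of_nonneg (Finset.filter_subset _ _)
          intro x _ _
          positivity
      _ = (Real.exp t + Real.exp (-t)) ^ N + (Real.exp (-t) + Real.exp (- -t)) ^ N := by
          rw [Finset.sum_add_distrib, sum_exp_Sm, sum_exp_Sm]
      _ ≤ 2 ^ (N+1) * Real.exp (N * t^2 / 2) := by
          rw [neg_neg, show Real.exp (-t) + Real.exp t = Real.exp t + Real.exp (-t) by ring]
          have hc : Real.exp t + Real.exp (-t) ≤ 2 * Real.exp (t^2/2) := by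
            have := Real.cosh_le_exp_half_sq t
            rw [Real.cosh_eq] at this
            linarith
          have h2 : (Real.exp t + Real.exp (-t)) ^ N ≤ (2 * Real.exp (t^2/2)) ^ N := by
            apply pow_le_pow_left₀ (by positivity) hc
          have h3 : (2 * Real.exp (t^2/2)) ^ N = 2^N * Real.exp (N * t^2/2) := by
            rw [mul_pow, ← Real.exp_nat_mul]
            ring_nf
          rw [pow_succ]
          nlinarith [Real.exp_pos (N * t^2/2), pow_pos (show (0:ℝ) < 2 by norm_num) N]
  have hexp : Real.exp (N * t^2 / 2) = Real.exp (-u^2/(2*N)) * Real.exp (t * u) := by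
    rw [← Real.exp_add]
    congr 1
    rw [ht]
    field_simp
    ring
  rw [hexp, ← mul_assoc] at key
  have := Real.exp_pos (t * u)
  exact le_of_mul_le_mul_right key this

lemma telescope_bound (N : ℕ) (hN : 1 ≤ N) (β r : ℝ) (hβ0 : 0 ≤ β) (hr : 0 ≤ r)
    (v : ℝ) (hv : r < |v|) (hvN : |v| ≤ N) :
    Real.exp (β * v^2/(2*N)) ≤ Real.exp (β*(r+1)^2/(2*N)) +
      ∑ j ∈ Finset.Icc 1 N,
        (Real.exp (β*(r+(j:ℝ)+1)^2/(2*N)) - Real.exp (β*(r+(j:ℝ))^2/(2*N))) *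
          (if r + (j:ℝ) ≤ |v| then 1 else 0) := by
  have hNpos : (0:ℝ) < N := by exact_mod_cast hN
  set J : ℕ := ⌊|v| - r⌋₊ with hJ
  have hsub : 0 ≤ |v| - r := by linarith
  have hJN : J ≤ N := by
    have h1 : |v| - r ≤ (N:ℝ) := by linarith [abs_nonneg v]
    calc J ≤ ⌊(N:ℝ)⌋₊ := Nat.floor_mono h1
      _ = N := Nat.floor_natCast N
  have hite : ∀ j ∈ Finset.Icc 1 N,
      (Real.exp (β*(r+(j:ℝ)+1)^2/(2*N)) - Real.exp (β*(r+(j:ℝ))^2/(2*N))) *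
          (if r + (j:ℝ) ≤ |v| then 1 else 0)
      = if j ≤ J then
          (Real.exp (β*(r+(j:ℝ)+1)^2/(2*N)) - Real.exp (β*(r+(j:ℝ))^2/(2*N))) else 0 := by
    intro j _
    have : (r + (j:ℝ) ≤ |v|) ↔ (j ≤ J) := by
      rw [Nat.le_floor_iff hsub]
      constructor <;> intro h <;> linarith
    by_cases h : r + (j:ℝ) ≤ |v|
    · rw [if_pos h, if_pos (this.1 h), mul_one]
    · rw [if_neg h, if_neg (fun hc => h (this.2 hc)), mul_zero]
  rw [Finset.sum_congr rfl hite, Finset.sum_ite, Finset.sum_const_zero, add_zero]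
  have hfil : (Finset.Icc 1 N).filter (fun j => j ≤ J) = Finset.Icc 1 J := by
    ext j
    simp only [Finset.mem_filter, Finset.mem_Icc]
    omega
  rw [hfil]
  have htel : ∑ j ∈ Finset.Icc 1 J,
      (Real.exp (β*(r+(j:ℝ)+1)^2/(2*N)) - Real.exp (β*(r+(j:ℝ))^2/(2*N)))
      = Real.exp (β*(r+(J:ℝ)+1)^2/(2*N)) - Real.exp (β*(r+1)^2/(2*N)) := by
    rw [← Finset.Ico_add_one_right_eq_Icc, Finset.sum_Ico_eq_sum_range]
    have : ∀ i ∈ Finset.range (J + 1 - 1),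
        (Real.exp (β*(r+((1+i:ℕ):ℝ)+1)^2/(2*N)) - Real.exp (β*(r+((1+i:ℕ):ℝ))^2/(2*N)))
        = (fun k : ℕ => Real.exp (β*(r+(k:ℝ)+1)^2/(2*N))) (i+1)
          - (fun k : ℕ => Real.exp (β*(r+(k:ℝ)+1)^2/(2*N))) i := by
      intro i _
      push_cast
      ring_nf
    rw [Finset.sum_congr rfl this, Finset.sum_range_sub
      (fun k : ℕ => Real.exp (β*(r+(k:ℝ)+1)^2/(2*N)))]
    norm_num
  rw [htel]
  have hfin : Real.exp (β * v^2/(2*N)) ≤ Real.exp (β*(r+(J:ℝ)+1)^2/(2*N)) := by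
    apply Real.exp_le_exp.2
    apply div_le_div_of_nonneg_right ?_ (by positivity)
    apply mul_le_mul_of_nonneg_left ?_ hβ0
    rw [← sq_abs v]
    apply pow_le_pow_left₀ (abs_nonneg v) ?_ 2
    have := Nat.lt_floor_add_one (|v| - r)
    rw [← hJ] at this
    linarith
  linarith

lemma main_bound (N : ℕ) (hN : 1 ≤ N) (β : ℝ) (hβ0 : 0 ≤ β) (hβ1 : β < 1)
    (a : ℝ) (ha : 0 ≤ a) (har : Real.sqrt a ≤ N) :
    ∑ x ∈ Finset.univ.filter (fun x : Fin N → Bool => a < (Sm N x)^2),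
        Real.exp (β * (Sm N x)^2 / (2*N))
      ≤ 2 ^ (N+1) * ((1 + 3/(1-β)) * Real.exp (5/2)) * Real.exp (-((1-β) * a) / (2*N)) := by
  have hNpos : (0:ℝ) < N := by exact_mod_cast hN
  have hN1 : (1:ℝ) ≤ N := by exact_mod_cast hN
  have h2N : (0:ℝ) < 2*N := by positivity
  have hδ : (0:ℝ) < 1 - β := by linarith
  set r := Real.sqrt a with hr
  have hr0 : 0 ≤ r := Real.sqrt_nonneg a
  have hrsq : r^2 = a := Real.sq_sqrt ha
  set A := Finset.univ.filter (fun x : Fin N → Bool => a < (Sm N x)^2) with hA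
  -- Step 1: pointwise telescoping, summed
  have step1 : ∑ x ∈ A, Real.exp (β * (Sm N x)^2 / (2*N))
      ≤ (A.card : ℝ) * Real.exp (β*(r+1)^2/(2*N))
        + ∑ j ∈ Finset.Icc 1 N,
            (Real.exp (β*(r+(j:ℝ)+1)^2/(2*N)) - Real.exp (β*(r+(j:ℝ))^2/(2*N)))
              * ((A.filter (fun x => r + (j:ℝ) ≤ |Sm N x|)).card : ℝ) := by
    have hpt : ∀ x ∈ A, Real.exp (β * (Sm N x)^2 / (2*N))
        ≤ Real.exp (β*(r+1)^2/(2*N)) + ∑ j ∈ Finset.Icc 1 N,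
            (Real.exp (β*(r+(j:ℝ)+1)^2/(2*N)) - Real.exp (β*(r+(j:ℝ))^2/(2*N)))
              * (if r + (j:ℝ) ≤ |Sm N x| then 1 else 0) := by
      intro x hx
      have hx2 : a < (Sm N x)^2 := by
        have := (Finset.mem_filter.1 (hA ▸ hx)).2
        simpa using this
      have habs : r < |Sm N x| := by
        have h := Real.sqrt_lt_sqrt ha hx2
        rwa [Real.sqrt_sq_eq_abs] at h
      exact telescope_bound N hN β r hβ0 hr0 _ habs (abs_Sm_le N x)
    calc ∑ x ∈ A, Real.exp (β * (Sm N x)^2 / (2*N))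
        ≤ ∑ x ∈ A, (Real.exp (β*(r+1)^2/(2*N)) + ∑ j ∈ Finset.Icc 1 N,
            (Real.exp (β*(r+(j:ℝ)+1)^2/(2*N)) - Real.exp (β*(r+(j:ℝ))^2/(2*N)))
              * (if r + (j:ℝ) ≤ |Sm N x| then 1 else 0)) := Finset.sum_le_sum hpt
      _ = (A.card : ℝ) * Real.exp (β*(r+1)^2/(2*N))
          + ∑ j ∈ Finset.Icc 1 N,
            (Real.exp (β*(r+(j:ℝ)+1)^2/(2*N)) - Real.exp (β*(r+(j:ℝ))^2/(2*N)))
              * ((A.filter (fun x => r + (j:ℝ) ≤ |Sm N x|)).card : ℝ) := by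
          rw [Finset.sum_add_distrib, Finset.sum_const, nsmul_eq_mul, Finset.sum_comm]
          congr 1
          refine Finset.sum_congr rfl fun j _ => ?_
          rw [← Finset.mul_sum, Finset.sum_boole]
  -- Hoeffding bound on A's cardinality
  have hAcard : (A.card : ℝ) ≤ 2^(N+1) * Real.exp (-r^2/(2*N)) := by
    have hsub : A ⊆ Finset.univ.filter (fun x : Fin N → Bool => r ≤ |Sm N x|) := by
      intro x hx
      have hx2 : a < (Sm N x)^2 := by
        have := (Finset.mem_filter.1 (hA ▸ hx)).2
        simpa using this
      have h := Real.sqrt_lt_sqrt ha hx2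
      rw [Real.sqrt_sq_eq_abs] at h
      simp only [Finset.mem_filter, Finset.mem_univ, true_and]
      exact h.le
    calc (A.card : ℝ) ≤ ((Finset.univ.filter (fun x : Fin N → Bool => r ≤ |Sm N x|)).card : ℝ) := by
          exact_mod_cast Finset.card_le_card hsub
      _ ≤ 2^(N+1) * Real.exp (-r^2/(2*N)) := hoeffding N hN r hr0
  -- First piece
  have hfirst : (A.card : ℝ) * Real.exp (β*(r+1)^2/(2*N))
      ≤ 2^(N+1) * Real.exp (5/2) * Real.exp (-((1-β)*a)/(2*N)) := by
    calc (A.card : ℝ) * Real.exp (β*(r+1)^2/(2*N))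
        ≤ (2^(N+1) * Real.exp (-r^2/(2*N))) * Real.exp (β*(r+1)^2/(2*N)) :=
          mul_le_mul_of_nonneg_right hAcard (Real.exp_pos _).le
      _ = 2^(N+1) * Real.exp (-r^2/(2*N) + β*(r+1)^2/(2*N)) := by
          rw [mul_assoc, ← Real.exp_add]
      _ ≤ 2^(N+1) * Real.exp (5/2 + -((1-β)*a)/(2*N)) := by
          apply mul_le_mul_of_nonneg_left ?_ (by positivity)
          apply Real.exp_le_exp.2
          rw [← hrsq]
          have e1 : -r^2/(2*(N:ℝ)) + β*(r+1)^2/(2*N) = (β*(r+1)^2 - r^2)/(2*N) := by ring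
          have e2 : (5:ℝ)/2 + -((1-β)*r^2)/(2*(N:ℝ)) = (5*N - (1-β)*r^2)/(2*N) := by
            field_simp
            ring
          rw [e1, e2]
          apply div_le_div_of_nonneg_right ?_ h2N.le
          nlinarith [har, hr0, hβ0, hβ1, hN1]
      _ = 2^(N+1) * Real.exp (5/2) * Real.exp (-((1-β)*a)/(2*N)) := by
          rw [Real.exp_add, ← mul_assoc]
  -- Per-j bound
  have hterm : ∀ j ∈ Finset.Icc 1 N,
      (Real.exp (β*(r+(j:ℝ)+1)^2/(2*N)) - Real.exp (β*(r+(j:ℝ))^2/(2*N)))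
        * ((A.filter (fun x => r + (j:ℝ) ≤ |Sm N x|)).card : ℝ)
      ≤ 2^(N+1) * (3/(1-β) * Real.exp (5/2)) *
          (Real.exp (-((1-β)*(r+(j:ℝ)-1)^2)/(2*N)) - Real.exp (-((1-β)*(r+(j:ℝ))^2)/(2*N))) := by
    intro j hj
    obtain ⟨hj1, hjN⟩ := Finset.mem_Icc.1 hj
    set u : ℝ := r + (j:ℝ) with hu
    have hj1' : (1:ℝ) ≤ (j:ℝ) := by exact_mod_cast hj1
    have hjN' : (j:ℝ) ≤ (N:ℝ) := by exact_mod_cast hjN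
    have hu1 : (1:ℝ) ≤ u := by rw [hu]; linarith
    have hu2 : u ≤ 2*N := by rw [hu]; linarith [har]
    have hu0 : 0 ≤ u := by linarith
    -- count bound
    have hcnt : ((A.filter (fun x => u ≤ |Sm N x|)).card : ℝ)
        ≤ 2^(N+1) * Real.exp (-u^2/(2*N)) := by
      have hsub : A.filter (fun x => u ≤ |Sm N x|)
          ⊆ Finset.univ.filter (fun x : Fin N → Bool => u ≤ |Sm N x|) := by
        intro x hx
        simp only [Finset.mem_filter, Finset.mem_univ, true_and]
        exact (Finset.mem_filter.1 hx).2
      calc ((A.filter (fun x => u ≤ |Sm N x|)).card : ℝ)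
          ≤ ((Finset.univ.filter (fun x : Fin N → Bool => u ≤ |Sm N x|)).card : ℝ) := by
            exact_mod_cast Finset.card_le_card hsub
        _ ≤ 2^(N+1) * Real.exp (-u^2/(2*N)) := hoeffding N hN u hu0
    -- increment bound
    have hΔ : Real.exp (β*(u+1)^2/(2*N)) - Real.exp (β*u^2/(2*N))
        ≤ Real.exp (β*(u+1)^2/(2*N)) * (β*(2*u+1)/(2*N)) := by
      have h1 := Real.add_one_le_exp (β*u^2/(2*N) - β*(u+1)^2/(2*N))
      have h2 : Real.exp (β*u^2/(2*N))
          = Real.exp (β*(u+1)^2/(2*N)) * Real.exp (β*u^2/(2*N) - β*(u+1)^2/(2*N)) := by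
        rw [← Real.exp_add]; ring_nf
      have h3 : Real.exp (β*(u+1)^2/(2*N)) * (β*u^2/(2*N) - β*(u+1)^2/(2*N) + 1)
          ≤ Real.exp (β*u^2/(2*N)) := by
        rw [h2]; exact mul_le_mul_of_nonneg_left h1 (Real.exp_pos _).le
      have hpq : β*(u+1)^2/(2*(N:ℝ)) - β*u^2/(2*N) = β*(2*u+1)/(2*N) := by ring
      nlinarith [Real.exp_pos (β*(u+1)^2/(2*N))]
    have hΔ0 : 0 ≤ Real.exp (β*(u+1)^2/(2*N)) - Real.exp (β*u^2/(2*N)) := by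
      have : β*u^2/(2*(N:ℝ)) ≤ β*(u+1)^2/(2*N) := by
        apply div_le_div_of_nonneg_right ?_ h2N.le
        nlinarith
      linarith [Real.exp_le_exp.2 this]
    -- exp combination bound
    have hexp2 : Real.exp (β*(u+1)^2/(2*N)) * Real.exp (-u^2/(2*N))
        ≤ Real.exp (5/2) * Real.exp (-((1-β)*u^2)/(2*N)) := by
      rw [← Real.exp_add, ← Real.exp_add]
      apply Real.exp_le_exp.2
      have e1 : β*(u+1)^2/(2*(N:ℝ)) + -u^2/(2*N) = (β*(u+1)^2 - u^2)/(2*N) := by ring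
      have e2 : (5:ℝ)/2 + -((1-β)*u^2)/(2*(N:ℝ)) = (5*N - (1-β)*u^2)/(2*N) := by
        field_simp; ring
      rw [e1, e2]
      apply div_le_div_of_nonneg_right ?_ h2N.le
      nlinarith
    -- telescoping step for F
    have hFm : Real.exp (-((1-β)*u^2)/(2*N)) * ((1-β)*(2*u-1)/(2*N))
        ≤ Real.exp (-((1-β)*(u-1)^2)/(2*N)) - Real.exp (-((1-β)*u^2)/(2*N)) := by
      have h1 := Real.add_one_le_exp ((1-β)*(2*u-1)/(2*N))
      have h2 : Real.exp (-((1-β)*(u-1)^2)/(2*N))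
          = Real.exp (-((1-β)*u^2)/(2*N)) * Real.exp ((1-β)*(2*u-1)/(2*N)) := by
        rw [← Real.exp_add]; congr 1; ring
      rw [h2]
      have h3 := mul_le_mul_of_nonneg_left h1 (Real.exp_pos (-((1-β)*u^2)/(2*N))).le
      nlinarith [h3]
    have hFstep : (β*(2*u+1)/(2*N)) * Real.exp (-((1-β)*u^2)/(2*N))
        ≤ (3/(1-β)) * (Real.exp (-((1-β)*(u-1)^2)/(2*N)) - Real.exp (-((1-β)*u^2)/(2*N))) := by
      have hnum : β*(2*u+1) ≤ 3*(2*u-1) := by nlinarith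
      have hchain : (β*(2*u+1)/(2*N)) * Real.exp (-((1-β)*u^2)/(2*N))
          ≤ (3/(1-β)) * (Real.exp (-((1-β)*u^2)/(2*N)) * ((1-β)*(2*u-1)/(2*N))) := by
        have e3 : (3/(1-β)) * (Real.exp (-((1-β)*u^2)/(2*N)) * ((1-β)*(2*u-1)/(2*N)))
            = (3*(2*u-1)/(2*N)) * Real.exp (-((1-β)*u^2)/(2*N)) := by
          field_simp
        rw [e3]
        apply mul_le_mul_of_nonneg_right ?_ (Real.exp_pos _).le
        apply div_le_div_of_nonneg_right hnum h2N.le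
      calc (β*(2*u+1)/(2*N)) * Real.exp (-((1-β)*u^2)/(2*N))
          ≤ (3/(1-β)) * (Real.exp (-((1-β)*u^2)/(2*N)) * ((1-β)*(2*u-1)/(2*N))) := hchain
        _ ≤ (3/(1-β)) * (Real.exp (-((1-β)*(u-1)^2)/(2*N)) - Real.exp (-((1-β)*u^2)/(2*N))) := by
            apply mul_le_mul_of_nonneg_left hFm (by positivity)
    -- assemble
    have hb0 : 0 ≤ Real.exp (β*(u+1)^2/(2*N)) * (β*(2*u+1)/(2*N)) := by
      apply mul_nonneg (Real.exp_pos _).le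
      apply div_nonneg (mul_nonneg hβ0 (by linarith)) h2N.le
    have hassemble :
        (Real.exp (β*(u+1)^2/(2*N)) - Real.exp (β*u^2/(2*N)))
          * ((A.filter (fun x => u ≤ |Sm N x|)).card : ℝ)
        ≤ 2^(N+1) * (3/(1-β) * Real.exp (5/2)) *
            (Real.exp (-((1-β)*(u-1)^2)/(2*N)) - Real.exp (-((1-β)*u^2)/(2*N))) := by
      calc (Real.exp (β*(u+1)^2/(2*N)) - Real.exp (β*u^2/(2*N)))
            * ((A.filter (fun x => u ≤ |Sm N x|)).card : ℝ)
          ≤ (Real.exp (β*(u+1)^2/(2*N)) * (β*(2*u+1)/(2*N)))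
              * (2^(N+1) * Real.exp (-u^2/(2*N))) :=
            mul_le_mul hΔ hcnt (Nat.cast_nonneg _) hb0
        _ = 2^(N+1) * ((β*(2*u+1)/(2*N))
              * (Real.exp (β*(u+1)^2/(2*N)) * Real.exp (-u^2/(2*N)))) := by ring
        _ ≤ 2^(N+1) * ((β*(2*u+1)/(2*N))
              * (Real.exp (5/2) * Real.exp (-((1-β)*u^2)/(2*N)))) := by
            apply mul_le_mul_of_nonneg_left ?_ (by positivity)
            apply mul_le_mul_of_nonneg_left hexp2
            apply div_nonneg (mul_nonneg hβ0 (by linarith)) h2N.le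
        _ = 2^(N+1) * Real.exp (5/2) * ((β*(2*u+1)/(2*N)) * Real.exp (-((1-β)*u^2)/(2*N))) := by
            ring
        _ ≤ 2^(N+1) * Real.exp (5/2) *
              ((3/(1-β)) * (Real.exp (-((1-β)*(u-1)^2)/(2*N)) - Real.exp (-((1-β)*u^2)/(2*N)))) := by
            apply mul_le_mul_of_nonneg_left hFstep (by positivity)
        _ = 2^(N+1) * (3/(1-β) * Real.exp (5/2)) *
              (Real.exp (-((1-β)*(u-1)^2)/(2*N)) - Real.exp (-((1-β)*u^2)/(2*N))) := by ring
    have hu1eq : u - 1 = r + (j:ℝ) - 1 := by rw [hu]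
    rw [← hu1eq]
    exact hassemble
  -- telescoping sum
  have htelsum : ∑ j ∈ Finset.Icc 1 N,
      (Real.exp (-((1-β)*(r+(j:ℝ)-1)^2)/(2*N)) - Real.exp (-((1-β)*(r+(j:ℝ))^2)/(2*N)))
      = Real.exp (-((1-β)*r^2)/(2*N)) - Real.exp (-((1-β)*(r+(N:ℝ))^2)/(2*N)) := by
    rw [← Finset.Ico_add_one_right_eq_Icc, Finset.sum_Ico_eq_sum_range]
    have hc : ∀ i ∈ Finset.range (N+1-1),
        (Real.exp (-((1-β)*(r+((1+i:ℕ):ℝ)-1)^2)/(2*N)) - Real.exp (-((1-β)*(r+((1+i:ℕ):ℝ))^2)/(2*N)))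
        = (fun k : ℕ => Real.exp (-((1-β)*(r+(k:ℝ))^2)/(2*N))) i
          - (fun k : ℕ => Real.exp (-((1-β)*(r+(k:ℝ))^2)/(2*N))) (i+1) := by
      intro i _
      push_cast
      ring_nf
    rw [Finset.sum_congr rfl hc, Finset.sum_range_sub'
      (fun k : ℕ => Real.exp (-((1-β)*(r+(k:ℝ))^2)/(2*N)))]
    norm_num
  -- conclude
  have hsumbound : ∑ j ∈ Finset.Icc 1 N,
      (Real.exp (β*(r+(j:ℝ)+1)^2/(2*N)) - Real.exp (β*(r+(j:ℝ))^2/(2*N)))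
        * ((A.filter (fun x => r + (j:ℝ) ≤ |Sm N x|)).card : ℝ)
      ≤ 2^(N+1) * (3/(1-β) * Real.exp (5/2)) * Real.exp (-((1-β)*a)/(2*N)) := by
    calc ∑ j ∈ Finset.Icc 1 N,
        (Real.exp (β*(r+(j:ℝ)+1)^2/(2*N)) - Real.exp (β*(r+(j:ℝ))^2/(2*N)))
          * ((A.filter (fun x => r + (j:ℝ) ≤ |Sm N x|)).card : ℝ)
        ≤ ∑ j ∈ Finset.Icc 1 N, 2^(N+1) * (3/(1-β) * Real.exp (5/2)) *
            (Real.exp (-((1-β)*(r+(j:ℝ)-1)^2)/(2*N)) - Real.exp (-((1-β)*(r+(j:ℝ))^2)/(2*N))) :=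
          Finset.sum_le_sum hterm
      _ = 2^(N+1) * (3/(1-β) * Real.exp (5/2)) *
            (Real.exp (-((1-β)*r^2)/(2*N)) - Real.exp (-((1-β)*(r+(N:ℝ))^2)/(2*N))) := by
          rw [← Finset.mul_sum, htelsum]
      _ ≤ 2^(N+1) * (3/(1-β) * Real.exp (5/2)) * Real.exp (-((1-β)*a)/(2*N)) := by
          apply mul_le_mul_of_nonneg_left ?_ (by positivity)
          rw [← hrsq]
          linarith [Real.exp_pos (-((1-β)*(r+(N:ℝ))^2)/(2*N))]
  calc ∑ x ∈ A, Real.exp (β * (Sm N x)^2 / (2*N))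
      ≤ (A.card : ℝ) * Real.exp (β*(r+1)^2/(2*N))
        + ∑ j ∈ Finset.Icc 1 N,
            (Real.exp (β*(r+(j:ℝ)+1)^2/(2*N)) - Real.exp (β*(r+(j:ℝ))^2/(2*N)))
              * ((A.filter (fun x => r + (j:ℝ) ≤ |Sm N x|)).card : ℝ) := step1
    _ ≤ 2^(N+1) * Real.exp (5/2) * Real.exp (-((1-β)*a)/(2*N))
        + 2^(N+1) * (3/(1-β) * Real.exp (5/2)) * Real.exp (-((1-β)*a)/(2*N)) := by
        linarith [hfirst, hsumbound]
    _ = 2 ^ (N+1) * ((1 + 3/(1-β)) * Real.exp (5/2)) * Real.exp (-((1-β) * a) / (2*N)) := by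
        ring

theorem stmt_10 (β : ℝ) (hβ : β < 1) (M : ℝ)
    (f : ∀ N : ℕ, (Fin N → Bool) → ℝ)
    (hf0 : ∀ N x, 0 ≤ f N x) (hfM : ∀ N x, f N x ≤ M)
    (p : ℕ → ℝ) (hp : ∀ N, 0 < p N ∧ p N ≤ 1)
    (hNp : Filter.Tendsto (fun N : ℕ => (N : ℝ) * p N) Filter.atTop Filter.atTop)
    (m : ℝ) (hm0 : 0 < m) (hm1 : m < 1) :
    Filter.Tendsto
      (fun N : ℕ =>
        (1 / 2 ^ N) *
          ∑ x ∈ Finset.univ.filter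
              (fun x : Fin N → Bool =>
                (N : ℝ) * ((N : ℝ) * p N) ^ m <
                  (∑ i, if x i then (1 : ℝ) else -1) ^ 2),
            f N x * Real.exp (β * (∑ i, if x i then (1 : ℝ) else -1) ^ 2 / (2 * N)))
      Filter.atTop (nhds 0) := by
  have hβ'0 : (0:ℝ) ≤ max β 0 := le_max_right β 0
  have hβ'1 : max β 0 < 1 := max_lt hβ one_pos
  set δ : ℝ := 1 - max β 0 with hδdef
  have hδ : 0 < δ := by rw [hδdef]; linarith
  have hM0 : 0 ≤ M := le_trans (hf0 0 (fun i => i.elim0)) (hfM 0 (fun i => i.elim0))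
  set C : ℝ := 2 * M * ((1 + 3/δ) * Real.exp (5/2)) with hC
  apply squeeze_zero' (g := fun N : ℕ => C * Real.exp (-(δ/2) * (((N:ℝ) * p N) ^ m)))
  · filter_upwards with N
    apply mul_nonneg (by positivity)
    apply Finset.sum_nonneg
    intro x _
    exact mul_nonneg (hf0 N x) (Real.exp_pos _).le
  · filter_upwards [Filter.eventually_ge_atTop 1] with N hN
    have hNpos : (0:ℝ) < N := by exact_mod_cast hN
    have hN1 : (1:ℝ) ≤ N := by exact_mod_cast hN
    have h2N : (0:ℝ) < 2*N := by positivity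
    have hpN := hp N
    have hNp0 : (0:ℝ) ≤ (N:ℝ) * p N := mul_nonneg (Nat.cast_nonneg N) hpN.1.le
    set a : ℝ := (N:ℝ) * ((N:ℝ) * p N) ^ m with had
    have ha : 0 ≤ a := mul_nonneg (Nat.cast_nonneg N) (Real.rpow_nonneg hNp0 m)
    have har : Real.sqrt a ≤ N := by
      have h1 : ((N:ℝ) * p N) ^ m ≤ (N:ℝ) ^ m :=
        Real.rpow_le_rpow hNp0 (mul_le_of_le_one_right (Nat.cast_nonneg N) hpN.2) hm0.le
      have h2 : (N:ℝ) ^ m ≤ (N:ℝ) ^ (1:ℝ) := Real.rpow_le_rpow_of_exponent_le hN1 hm1.le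
      rw [Real.rpow_one] at h2
      have ha2 : a ≤ (N:ℝ)^2 := by
        rw [had]
        nlinarith [Nat.cast_nonneg (α := ℝ) N]
      calc Real.sqrt a ≤ Real.sqrt ((N:ℝ)^2) := Real.sqrt_le_sqrt ha2
        _ = N := Real.sqrt_sq (Nat.cast_nonneg N)
    have hmain := main_bound N hN (max β 0) hβ'0 hβ'1 a ha har
    simp only [Sm] at hmain
    have hsum : ∑ x ∈ Finset.univ.filter
        (fun x : Fin N → Bool => a < (∑ i, if x i then (1:ℝ) else -1) ^ 2),
          f N x * Real.exp (β * (∑ i, if x i then (1:ℝ) else -1) ^ 2 / (2 * N))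
        ≤ M * ∑ x ∈ Finset.univ.filter
            (fun x : Fin N → Bool => a < (∑ i, if x i then (1:ℝ) else -1) ^ 2),
            Real.exp (max β 0 * (∑ i, if x i then (1:ℝ) else -1) ^ 2 / (2 * N)) := by
      rw [Finset.mul_sum]
      apply Finset.sum_le_sum
      intro x _
      apply mul_le_mul (hfM N x) ?_ (Real.exp_pos _).le hM0
      apply Real.exp_le_exp.2
      apply div_le_div_of_nonneg_right ?_ h2N.le
      exact mul_le_mul_of_nonneg_right (le_max_left β 0) (sq_nonneg _)
    have hfinal : (1 / (2:ℝ) ^ N) *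
        ∑ x ∈ Finset.univ.filter
            (fun x : Fin N → Bool => a < (∑ i, if x i then (1:ℝ) else -1) ^ 2),
          f N x * Real.exp (β * (∑ i, if x i then (1:ℝ) else -1) ^ 2 / (2 * N))
        ≤ C * Real.exp (-(δ/2) * (((N:ℝ) * p N) ^ m)) := by
      have hb : M * ∑ x ∈ Finset.univ.filter
            (fun x : Fin N → Bool => a < (∑ i, if x i then (1:ℝ) else -1) ^ 2),
            Real.exp (max β 0 * (∑ i, if x i then (1:ℝ) else -1) ^ 2 / (2 * N))
          ≤ M * (2 ^ (N+1) * ((1 + 3/(1 - max β 0)) * Real.exp (5/2))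
              * Real.exp (-((1 - max β 0) * a) / (2*N))) :=
        mul_le_mul_of_nonneg_left hmain hM0
      have hexpeq : Real.exp (-((1 - max β 0) * a) / (2*(N:ℝ)))
          = Real.exp (-(δ/2) * (((N:ℝ) * p N) ^ m)) := by
        congr 1
        rw [had, hδdef]
        field_simp
      have hc2 : (1 / (2:ℝ) ^ N) * (M * (2 ^ (N+1) * ((1 + 3/(1 - max β 0)) * Real.exp (5/2))
              * Real.exp (-((1 - max β 0) * a) / (2*N))))
          = C * Real.exp (-(δ/2) * (((N:ℝ) * p N) ^ m)) := by
        rw [hexpeq, hC, hδdef]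
        have h2pow : (2:ℝ) ^ (N+1) = 2 * 2 ^ N := by ring
        rw [h2pow]
        field_simp
      calc (1 / (2:ℝ) ^ N) * ∑ x ∈ Finset.univ.filter
            (fun x : Fin N → Bool => a < (∑ i, if x i then (1:ℝ) else -1) ^ 2),
          f N x * Real.exp (β * (∑ i, if x i then (1:ℝ) else -1) ^ 2 / (2 * N))
          ≤ (1 / (2:ℝ) ^ N) * (M * (2 ^ (N+1) * ((1 + 3/(1 - max β 0)) * Real.exp (5/2))
              * Real.exp (-((1 - max β 0) * a) / (2*N)))) := by
            apply mul_le_mul_of_nonneg_left (le_trans hsum hb) (by positivity)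
        _ = C * Real.exp (-(δ/2) * (((N:ℝ) * p N) ^ m)) := hc2
    exact hfinal
  · have h1 : Filter.Tendsto (fun N : ℕ => ((N:ℝ) * p N) ^ m) Filter.atTop Filter.atTop :=
      (tendsto_rpow_atTop hm0).comp hNp
    have h2 : Filter.Tendsto (fun N : ℕ => -(δ/2) * (((N:ℝ) * p N) ^ m)) Filter.atTop Filter.atBot :=
      Filter.Tendsto.const_mul_atTop_of_neg (by linarith) h1
    have h3 : Filter.Tendsto (fun N : ℕ => Real.exp (-(δ/2) * (((N:ℝ) * p N) ^ m)))
        Filter.atTop (nhds 0) := Real.tendsto_exp_atBot.comp h2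
    simpa using h3.const_mul C
end
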